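/- Every LMD poset P (i.e., whenever a ∧ (b ∨ c) exists in P, then (a ∧ b) ∨ (a ∧ c) exists and equals it) admits an (ω,3)-representation: an order embedding into a powerset lattice preserving all existing finite meets and all existing binary joins. -/

import Mathlib

universe u

variable {P : Type u} [PartialOrder P]

/-- The downward closure of a set in a poset. -/
def dcl (S : Set P) : Set P := {q | ∃ s ∈ S, q ≤ s}

/-- A join-specification: a collection of nonempty subsets each having a join,
containing all singletons. -/
def IsJoinSpec (U : Set (Set P)) : Prop :=
  (∀ S ∈ U, ∃ j, IsLUB S j) ∧ (∀ p : P, {p} ∈ U) ∧ ∅ ∉ U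

/-- A `U`-ideal: a down-set closed under joins of members of `U` contained in it. -/
def IsUIdeal (U : Set (Set P)) (I : Set P) : Prop :=
  IsLowerSet I ∧ ∀ S ∈ U, S ⊆ I → ∀ j, IsLUB S j → j ∈ I

/-- The smallest `U`-ideal containing `S`. -/
def GammaU (U : Set (Set P)) (S : Set P) : Set P :=
  ⋂₀ {I | IsUIdeal U I ∧ S ⊆ I}

/-- A standard closure operator on the powerset of a poset. -/
def IsStdClosure (Γ : Set P → Set P) : Prop :=
  (∀ S, S ⊆ Γ S) ∧ (∀ S T, S ⊆ T → Γ S ⊆ Γ T) ∧ (∀ S, Γ (Γ S) = Γ S) ∧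
  (∀ p : P, Γ {p} = {q | q ≤ p})

/-- The join-specification induced by a standard closure operator. -/
def UGamma (Γ : Set P → Set P) : Set (Set P) :=
  {S | (∃ j, IsLUB S j) ∧ ∀ C, Γ C = C → S ⊆ C → ∀ j, IsLUB S j → j ∈ C}

section Aux

/-- Closed under existing binary joins. -/
def MyJoinClosed (I : Set P) : Prop :=
  ∀ u ∈ I, ∀ v ∈ I, ∀ j, IsLUB ({u, v} : Set P) j → j ∈ I

/-- Inductive closure: least lower set closed under existing binary joins containing `B`. -/
inductive MyCl (B : Set P) : P → Prop
  | base {x : P} : x ∈ B → MyCl B x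
  | down {x y : P} : MyCl B y → x ≤ y → MyCl B x
  | join {x y j : P} : MyCl B x → MyCl B y → IsLUB ({x, y} : Set P) j → MyCl B j

lemma myCl_subset_of_closed {B M : Set P} (hBM : B ⊆ M) (hlow : IsLowerSet M)
    (hjoin : MyJoinClosed M) : ∀ x, MyCl B x → x ∈ M := by
  intro x hx
  induction hx with
  | base h => exact hBM h
  | down _ hle ih => exact hlow hle ih
  | join _ _ hj ihx ihy => exact hjoin _ ihx _ ihy _ hj

lemma isGLB_pair_self {x j : P} (h : x ≤ j) : IsGLB ({x, j} : Set P) x := by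
  constructor
  · rintro z (rfl | hz)
    · exact le_rfl
    · simp_all
  · intro z hz
    exact hz (by simp)

/-- The key lemma, using LMD. -/
lemma key_lemma
    (hLMD : ∀ a b c : P, ∀ j, IsLUB ({b, c} : Set P) j → ∀ m, IsGLB ({a, j} : Set P) m →
      ∃ mb mc, IsGLB ({a, b} : Set P) mb ∧ IsGLB ({a, c} : Set P) mc ∧
        IsLUB ({mb, mc} : Set P) m)
    (M : Set P) :
    ∀ S : Set P, S.Finite → ∀ (T : Set P) (m x : P), IsGLB (T ∪ S) m →
      (∀ t ∈ T, x ≤ t) → (∀ s ∈ S, MyCl (M ∪ {y | y ≤ s}) x) →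
      MyCl (M ∪ {y | y ≤ m}) x := by
  intro S hS
  refine Set.Finite.induction_on S hS ?_ ?_
  · intro T m x hglb hT _
    refine MyCl.base (Or.inr ?_)
    exact hglb.2 (fun t ht => hT t (by simpa using ht))
  · intro s S₀ hs hS₀fin IH T m x hglb hT hcl
    have hcls : MyCl (M ∪ {y | y ≤ s}) x := hcl s (Set.mem_insert _ _)
    -- inner induction on the derivation of `hcls`, generalized over x ≤ y
    have inner : ∀ y, MyCl (M ∪ {y | y ≤ s}) y →
        ∀ x, x ≤ y → (∀ t ∈ T, x ≤ t) → (∀ s' ∈ S₀, MyCl (M ∪ {z | z ≤ s'}) x) →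
        MyCl (M ∪ {y | y ≤ m}) x := by
      intro y hy
      induction hy with
      | @base y hyb =>
        intro x hxy hxT hxS
        rcases hyb with hyM | hys
        · exact MyCl.down (MyCl.base (Or.inl hyM)) hxy
        · -- x ≤ s ; use the outer IH with T' = insert s T
          refine IH (insert s T) m x ?_ ?_ hxS
          · have : insert s T ∪ S₀ = T ∪ insert s S₀ := by
              ext z; simp [Set.mem_insert_iff]; tauto
            rwa [this]
          · rintro t (rfl | ht)
            · exact le_trans hxy hys
            · exact hxT t ht
      | @down y y' hy' hle ih =>
        intro x hxy hxT hxS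
        exact ih x (le_trans hxy hle) hxT hxS
      | @join u v j hu hv hj ihu ihv =>
        intro x hxy hxT hxS
        obtain ⟨xu, xv, hxu, hxv, hxj⟩ := hLMD x u v j hj x (isGLB_pair_self hxy)
        have hxu_le_x : xu ≤ x := hxu.1 (by simp)
        have hxu_le_u : xu ≤ u := hxu.1 (by simp)
        have hxv_le_x : xv ≤ x := hxv.1 (by simp)
        have hxv_le_v : xv ≤ v := hxv.1 (by simp)
        have h1 : MyCl (M ∪ {y | y ≤ m}) xu :=
          ihu xu hxu_le_u (fun t ht => le_trans hxu_le_x (hxT t ht))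
            (fun s' hs' => MyCl.down (hxS s' hs') hxu_le_x)
        have h2 : MyCl (M ∪ {y | y ≤ m}) xv :=
          ihv xv hxv_le_v (fun t ht => le_trans hxv_le_x (hxT t ht))
            (fun s' hs' => MyCl.down (hxS s' hs') hxv_le_x)
        exact MyCl.join h1 h2 hxj
    exact inner x hcls x le_rfl hT (fun s' hs' => hcl s' (Set.mem_insert_of_mem _ hs'))

/-- Separation lemma. -/
lemma separation
    (hLMD : ∀ a b c : P, ∀ j, IsLUB ({b, c} : Set P) j → ∀ m, IsGLB ({a, j} : Set P) m →
      ∃ mb mc, IsGLB ({a, b} : Set P) mb ∧ IsGLB ({a, c} : Set P) mc ∧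
        IsLUB ({mb, mc} : Set P) m)
    {p q : P} (hpq : ¬ p ≤ q) :
    ∃ M : Set P, IsLowerSet M ∧ MyJoinClosed M ∧ q ∈ M ∧ p ∉ M ∧
      ∀ S : Set P, S.Finite → (∀ s ∈ S, s ∉ M) → ∀ m, IsGLB S m → m ∉ M := by
  set 𝒮 : Set (Set P) := {I | IsLowerSet I ∧ MyJoinClosed I ∧ q ∈ I ∧ p ∉ I} with h𝒮
  have hdq : {y : P | y ≤ q} ∈ 𝒮 := by
    refine ⟨fun a b hba ha => le_trans hba ha, ?_, le_rfl, hpq⟩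
    intro u hu v hv j hj
    exact hj.2 (by rintro z (rfl | hz) <;> simp_all)
  have hchains : ∀ c ⊆ 𝒮, IsChain (fun x1 x2 => x1 ⊆ x2) c → c.Nonempty →
      ∃ ub ∈ 𝒮, ∀ s ∈ c, s ⊆ ub := by
    intro c hc hchain hcne
    refine ⟨⋃₀ c, ⟨?_, ?_, ?_, ?_⟩, fun s hs => Set.subset_sUnion_of_mem hs⟩
    · rintro a b hba ⟨I, hI, haI⟩
      exact ⟨I, hI, (hc hI).1 hba haI⟩
    · rintro u ⟨I, hI, huI⟩ v ⟨J, hJ, hvJ⟩ j hj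
      rcases hchain.total hI hJ with h | h
      · exact ⟨J, hJ, (hc hJ).2.1 u (h huI) v hvJ j hj⟩
      · exact ⟨I, hI, (hc hI).2.1 u huI v (h hvJ) j hj⟩
    · obtain ⟨I, hI⟩ := hcne
      exact ⟨I, hI, (hc hI).2.2.1⟩
    · rintro ⟨I, hI, hpI⟩
      exact (hc hI).2.2.2 hpI
  obtain ⟨M, -, hMmax⟩ := zorn_subset_nonempty 𝒮 hchains _ hdq
  have hM𝒮 := hMmax.prop
  obtain ⟨hMlow, hMjoin, hqM, hpM⟩ := hM𝒮
  refine ⟨M, hMlow, hMjoin, hqM, hpM, ?_⟩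
  intro S hSfin hSM m hm hmM
  -- For each s ∈ S, p ∈ MyCl (M ∪ ↓s)
  have hp : ∀ s ∈ S, MyCl (M ∪ {y | y ≤ s}) p := by
    intro s hs
    by_contra hps
    have hA : setOf (MyCl (M ∪ {y | y ≤ s})) ∈ 𝒮 := by
      refine ⟨?_, ?_, MyCl.base (Or.inl hqM), hps⟩
      · intro a b hba hb
        exact MyCl.down hb hba
      · intro u hu v hv j hj
        exact MyCl.join hu hv hj
    have hsub : M ⊆ setOf (MyCl (M ∪ {y | y ≤ s})) :=
      fun x hx => MyCl.base (Or.inl hx)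
    have := hMmax.eq_of_le hA hsub
    have hsA : MyCl (M ∪ {y | y ≤ s}) s := MyCl.base (Or.inr le_rfl)
    exact hSM s hs (this ▸ hsA)
  have hpm : MyCl (M ∪ {y | y ≤ m}) p := by
    have := key_lemma hLMD M S hSfin ∅ m p (by simpa using hm) (by simp) hp
    exact this
  have hMm : M ∪ {y | y ≤ m} = M := by
    apply Set.union_eq_self_of_subset_right
    intro y hy
    exact hMlow hy hmM
  rw [hMm] at hpm
  exact hpM (myCl_subset_of_closed (le_refl M) hMlow hMjoin p hpm)

end Aux

theorem LMD_implies_omega_three_representable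
    (hLMD : ∀ a b c : P, ∀ j, IsLUB ({b, c} : Set P) j → ∀ m, IsGLB ({a, j} : Set P) m →
      ∃ mb mc, IsGLB ({a, b} : Set P) mb ∧ IsGLB ({a, c} : Set P) mc ∧
        IsLUB ({mb, mc} : Set P) m) :
    ∃ (X : Type u) (h : P → Set X),
      (∀ p q : P, h p ⊆ h q ↔ p ≤ q) ∧
      (∀ (S : Set P) (m : P), S.Finite → IsGLB S m → h m = ⋂ s ∈ S, h s) ∧
      (∀ (S : Set P) (j : P), Cardinal.mk S < 3 → IsLUB S j → h j = ⋃ s ∈ S, h s) := by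
  classical
  set X : Type u := {I : Set P // IsLowerSet I ∧ MyJoinClosed I ∧ I.Nonempty ∧
      ∀ S : Set P, S.Finite → (∀ s ∈ S, s ∉ I) → ∀ m, IsGLB S m → m ∉ I} with hX
  refine ⟨X, fun p => {I : X | p ∉ I.1}, ?_, ?_, ?_⟩
  · intro p q
    constructor
    · intro hsub
      by_contra hpq
      obtain ⟨M, hMlow, hMjoin, hqM, hpM, hMmeet⟩ := separation hLMD hpq
      have hMX : M ∈ {I : Set P | IsLowerSet I ∧ MyJoinClosed I ∧ I.Nonempty ∧
          ∀ S : Set P, S.Finite → (∀ s ∈ S, s ∉ I) → ∀ m, IsGLB S m → m ∉ I} :=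
        ⟨hMlow, hMjoin, ⟨q, hqM⟩, hMmeet⟩
      have := hsub (show p ∉ (⟨M, hMX⟩ : X).1 from hpM)
      exact this hqM
    · intro hpq I hI hqI
      exact hI (I.2.1 hpq hqI)
  · intro S m hSfin hm
    ext I
    simp only [Set.mem_setOf_eq, Set.mem_iInter]
    constructor
    · intro hmI s hs
      intro hsI
      exact hmI (I.2.1 (hm.1 hs) hsI)
    · intro hall
      exact I.2.2.2.2 S hSfin hall m hm
  · intro S j hcard hj
    have hSfin : S.Finite := Cardinal.lt_aleph0_iff_set_finite.mp
      (lt_trans hcard (by exact_mod_cast Cardinal.nat_lt_aleph0 3))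
    have hfc : S.ncard < 3 := by
      haveI := hSfin.fintype
      have h1 : Cardinal.mk S = (Fintype.card S : Cardinal) := Cardinal.mk_fintype _
      have h2 : ((Fintype.card S : ℕ) : Cardinal) < ((3 : ℕ) : Cardinal) := by
        rw [← h1]; exact_mod_cast hcard
      have h3 : Fintype.card S < 3 := by exact_mod_cast h2
      rwa [Set.ncard_eq_toFinset_card', Set.toFinset_card]
    have hsup : ∀ b ∈ S, b ≤ j := fun b hb => hj.1 hb
    interval_cases h : S.ncard
    · -- S = ∅
      have hS : S = ∅ := (Set.ncard_eq_zero hSfin).mp h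
      subst hS
      ext I
      simp only [Set.mem_setOf_eq, Set.mem_empty_iff_false, Set.iUnion_of_empty,
        Set.iUnion_empty]
      constructor
      · intro hjI
        obtain ⟨b, hb⟩ := I.2.2.2.1
        have : j ≤ b := hj.2 (by intro z hz; exact absurd hz (Set.notMem_empty z))
        exact hjI (I.2.1 this hb)
      · exact False.elim
    · -- S = {b}
      obtain ⟨b, rfl⟩ := Set.ncard_eq_one.mp h
      have : j = b := le_antisymm (hj.2 (by simp)) (hsup b rfl)
      subst this
      ext I; simp
    · -- S = {b, c}
      obtain ⟨b, c, hbc, rfl⟩ := Set.ncard_eq_two.mp h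
      ext I
      simp only [Set.mem_setOf_eq, Set.mem_iUnion, Set.mem_insert_iff,
        Set.mem_singleton_iff, exists_prop]
      constructor
      · intro hjI
        by_contra hcon
        push_neg at hcon
        have hbI : b ∈ I.1 := hcon b (Or.inl rfl)
        have hcI : c ∈ I.1 := hcon c (Or.inr rfl)
        exact hjI (I.2.2.1 b hbI c hcI j hj)
      · rintro ⟨s, hs, hsI⟩ hjI
        rcases hs with rfl | rfl
        · exact hsI (I.2.1 (hsup s (by simp)) hjI)
        · exact hsI (I.2.1 (hsup s (by simp)) hjI)
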